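/- For every RVT code word W, the greatest common divisor of all entries of the Puiseux characteristic PC(W) = [λ₀; λ₁, …, λ_g] equals 1. -/
import Mathlib


/-- The three symbols of an RVT code word. -/
inductive RVT : Type
  | R | V | T
deriving DecidableEq, Repr

/-- Replace a leading run of `T`'s by `R`'s. -/
def deT : List RVT → List RVT
  | RVT.T :: xs => RVT.R :: deT xs
  | xs => xs

/-- If the word begins with `V`, replace that `V` and the immediately
following `T`'s by `R`'s. -/
def reg : List RVT → List RVT
  | RVT.V :: xs => RVT.R :: deT xs
  | xs => xs

/-- The lifted word `L(W)`: remove the first symbol (an `R`), then replace a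
leading maximal critical block `V Tᵗ` by `R^(t+1)`. -/
def lift (w : List RVT) : List RVT := reg w.tail

/-- Length of the leading run of `T`'s. -/
def countT : List RVT → ℕ
  | RVT.T :: xs => countT xs + 1
  | _ => 0

/-- Fueled version of the front-end recursion for the Puiseux characteristic
(Theorem PCfront): base case `[1]` on all-`R` words; given
`PC(L(W)) = [l0; l1, ..., lg]`,
(A) if `W` begins `RR` then `PC(W) = [l0; l1+l0, ..., lg+l0]`;
(B) if `W` begins `R V T^t R` or `W = R V T^t` then
`PC(W) = [(t+2)l0; (t+3)l0, l1+l0, ..., lg+l0]`;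
(C) if `W` begins `R V T^t V` then `PC(W) = [l1; l1+l0, ..., lg+l0]`. -/
def PCf : ℕ → List RVT → List ℕ
  | 0, _ => [1]
  | _ + 1, [] => [1]
  | fuel + 1, w@(_ :: rest) =>
    if w.all (· = RVT.R) then [1]
    else
      let p := PCf fuel (lift w)
      let l0 := p.headD 1
      let tl := p.tail
      match rest with
      | RVT.V :: xs =>
        match xs.drop (countT xs) with
        | RVT.V :: _ => tl.headD 1 :: tl.map (· + l0)                                -- case (C)
        | _ => ((countT xs + 2) * l0) :: ((countT xs + 3) * l0) :: tl.map (· + l0)   -- case (B)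
      | _ => l0 :: tl.map (· + l0)                                                   -- case (A)

/-- The Puiseux characteristic `PC(W)` computed by the front-end recursion. -/
def PC (w : List RVT) : List ℕ := PCf w.length w

/-- A valid RVT code word: begins with `R`, and `T` occurs only immediately
after a `V` or a `T`. -/
def ValidRVT (w : List RVT) : Prop :=
  w.head? = some RVT.R ∧
  ∀ i, w[i + 1]? = some RVT.T → (w[i]? = some RVT.V ∨ w[i]? = some RVT.T)

/-- The function `E` on strings, with `E_T[a;b] = [a;a+b]`, `E_V[a;b] = [b;a+b]`,
`E_R = E_T`, and base value `E(empty) = [1;2]`; the leftmost symbol acts last. -/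
def Efun : List RVT → ℕ × ℕ
  | [] => (1, 2)
  | RVT.V :: q => ((Efun q).2, (Efun q).1 + (Efun q).2)
  | _ :: q => ((Efun q).1, (Efun q).1 + (Efun q).2)

/-- The Euclidean-type recursion: `Euc(1,2)` is the empty word; for coprime
`a < b`, if `b < 2a` then `Euc(a,b) = V · Euc(b-a,a)`, and if `b > 2a` then
`Euc(a,b) = T · Euc(a,b-a)`. -/
def Euc (a b : ℕ) : List RVT :=
  if a = 1 ∧ b = 2 then []
  else if _h1 : 0 < a ∧ a < b ∧ b < 2 * a then RVT.V :: Euc (b - a) a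
  else if _h2 : 0 < a ∧ a < b ∧ 2 * a < b then RVT.T :: Euc a (b - a)
  else []
termination_by a + b
decreasing_by all_goals omega

lemma gcd_map_add (l0 : ℕ) : ∀ tl : List ℕ,
    Nat.gcd l0 ((tl.map (· + l0)).foldr Nat.gcd 0) = Nat.gcd l0 (tl.foldr Nat.gcd 0)
  | [] => rfl
  | a :: t => by
    simp only [List.map_cons, List.foldr_cons]
    rw [← Nat.gcd_assoc, Nat.gcd_add_self_right, Nat.gcd_comm l0 a, Nat.gcd_assoc,
      gcd_map_add l0 t, ← Nat.gcd_assoc, Nat.gcd_comm a l0, Nat.gcd_assoc]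

lemma gcd_succ_consec (t : ℕ) : Nat.gcd (t + 2) (t + 3) = 1 := by
  have h : t + 3 = 1 + (t + 2) := by ring
  rw [h, Nat.gcd_add_self_right, Nat.gcd_one_right]

lemma PCf_gcd (fuel : ℕ) : ∀ w, ((PCf fuel w).foldr Nat.gcd 0) = 1 := by
  induction fuel with
  | zero => intro w; simp [PCf]
  | succ n ih =>
    intro w
    match w with
    | [] => simp [PCf]
    | c :: rest =>
      rw [PCf]
      split
      · simp
      · have H := ih (lift (c :: rest))
        set p := PCf n (lift (c :: rest)) with hp
        clear_value p
        match p with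
        | [] => simp [List.foldr] at H
        | l0 :: tl =>
          simp only [List.foldr_cons] at H
          have caseA : Nat.gcd ((l0 :: tl).headD 1)
              (((l0 :: tl).tail.map (· + (l0 :: tl).headD 1)).foldr Nat.gcd 0) = 1 := by
            simpa [gcd_map_add] using H
          have caseB : ∀ t : ℕ, Nat.gcd ((t + 2) * (l0 :: tl).headD 1)
              (Nat.gcd ((t + 3) * (l0 :: tl).headD 1)
                (((l0 :: tl).tail.map (· + (l0 :: tl).headD 1)).foldr Nat.gcd 0)) = 1 := by
            intro t
            simp only [List.headD_cons, List.tail_cons]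
            rw [← Nat.gcd_assoc, Nat.gcd_mul_right, gcd_succ_consec, one_mul,
              gcd_map_add]
            exact H
          have caseC : Nat.gcd ((l0 :: tl).tail.headD 1)
              (((l0 :: tl).tail.map (· + (l0 :: tl).headD 1)).foldr Nat.gcd 0) = 1 := by
            simp only [List.headD_cons, List.tail_cons]
            match tl with
            | [] => simp
            | l1 :: t2 =>
              simp only [List.headD_cons, List.map_cons, List.foldr_cons, List.foldr_cons] at *
              rw [← Nat.gcd_assoc, Nat.add_comm l1 l0, Nat.gcd_add_self_right, Nat.gcd_assoc,
                gcd_map_add, ← Nat.gcd_assoc, Nat.gcd_comm l1 l0, Nat.gcd_assoc]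
              exact H
          match rest with
          | [] => simpa using caseA
          | RVT.R :: xs => simpa using caseA
          | RVT.T :: xs => simpa using caseA
          | RVT.V :: xs =>
            match h : xs.drop (countT xs) with
            | RVT.V :: ys => dsimp only; rw [h]; simpa using caseC
            | [] => dsimp only; rw [h]; simpa using caseB (countT xs)
            | RVT.R :: ys => dsimp only; rw [h]; simpa using caseB (countT xs)
            | RVT.T :: ys => dsimp only; rw [h]; simpa using caseB (countT xs)

/-- The greatest common divisor of all entries of the Puiseux characteristic
of any RVT code word equals `1`. -/
theorem statement3 (W : List RVT) (hW : ValidRVT W) :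
    (PC W).foldr Nat.gcd 0 = 1 := by
  exact PCf_gcd W.length W
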